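/- Let λ be a nonzero complex number. Then the set of complex numbers z with |Im(z)| < 2π satisfying e^z = λz + 1 (i.e. zeros of the holomorphic function f(z) = e^z − λz − 1 in the open horizontal strip {z : Im(z) ∈ (−2π, 2π)}) is finite. -/

import Mathlib

open Real

/-- For any nonzero `λ : ℂ`, the zeros of `f(z) = e^z - λz - 1` in the open strip
`{z : |Im z| < 2π}` form a finite set. -/
theorem finite_zeros_in_strip (l : ℂ) (hl : l ≠ 0) :
    {z : ℂ | |z.im| < 2 * π ∧ Complex.exp z = l * z + 1}.Finite := by
  set f : ℂ → ℂ := fun z => Complex.exp z - (l * z + 1) with hf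
  have hfa : AnalyticOnNhd ℂ f Set.univ := by
    intro z _
    exact analyticAt_cexp.sub (((analyticAt_const).mul analyticAt_id).add analyticAt_const)
  -- f is not identically zero: f(2πi) = -2πi l ≠ 0
  have hne : f (2 * π * Complex.I) ≠ 0 := by
    simp only [hf, Complex.exp_two_pi_mul_I]
    intro h
    apply hl
    have : l * (2 * π * Complex.I) = 0 := by linear_combination -h
    rcases mul_eq_zero.mp this with h' | h'
    · exact h'
    · exfalso
      simp only [mul_eq_zero, Complex.I_ne_zero, or_false] at h'
      rcases h' with h' | h'
      · norm_num at h'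
      · exact_mod_cast Real.pi_ne_zero (by exact_mod_cast h')
  -- zeros of f are isolated
  have hiso : ∀ z : ℂ, f z = 0 → ∀ᶠ w in nhdsWithin z {z}ᶜ, f w ≠ 0 := by
    intro z hz
    rcases (hfa z (Set.mem_univ z)).eventually_eq_zero_or_eventually_ne_zero with h | h
    · exfalso
      have : Set.EqOn f 0 Set.univ :=
        hfa.eqOn_zero_of_preconnected_of_eventuallyEq_zero isPreconnected_univ
          (Set.mem_univ z) (h.filter_mono (le_refl _))
      exact hne (this (Set.mem_univ _))
    · exact h
  -- boundedness: find R bounding all zeros in the strip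
  have hC : Filter.Tendsto (fun x : ℝ => Real.exp x / x ^ 1) Filter.atTop Filter.atTop :=
    Real.tendsto_exp_div_pow_atTop 1
  set C : ℝ := ‖l‖ + 2 * π * ‖l‖ + 2 with hCdef
  obtain ⟨R₀, hR₀⟩ := (Filter.tendsto_atTop.mp hC C).exists_forall_of_atTop
  set X : ℝ := max R₀ 1 with hX
  set R : ℝ := max (2 / ‖l‖) (X + 2 * π) with hR
  have hlpos : (0:ℝ) < ‖l‖ := norm_pos_iff.mpr hl
  have hπ : (0:ℝ) < π := Real.pi_pos
  have hbound : {z : ℂ | |z.im| < 2 * π ∧ Complex.exp z = l * z + 1} ⊆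
      {z : ℂ | f z = 0} ∩ Metric.closedBall 0 R := by
    rintro z ⟨him, hz⟩
    have hfz : f z = 0 := by simp [hf, hz]
    refine ⟨hfz, ?_⟩
    rw [Metric.mem_closedBall, dist_zero_right]
    have habs : Real.exp z.re = ‖l * z + 1‖ := by
      rw [← hz, Complex.norm_exp]
    have hzle : ‖z‖ ≤ |z.re| + 2 * π :=
      le_trans (Complex.norm_le_abs_re_add_abs_im z) (by linarith)
    by_cases hre : z.re ≤ 0
    · -- exp(re) ≤ 1, so ‖l‖‖z‖ ≤ 2
      have h1 : Real.exp z.re ≤ 1 := Real.exp_le_one_iff.mpr hre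
      have h2 : ‖l‖ * ‖z‖ ≤ ‖l * z + 1‖ + 1 := by
        calc ‖l‖ * ‖z‖ = ‖l * z‖ := (norm_mul l z).symm
          _ = ‖(l * z + 1) - 1‖ := by ring_nf
          _ ≤ ‖l * z + 1‖ + ‖(1:ℂ)‖ := norm_sub_le _ _
          _ = ‖l * z + 1‖ + 1 := by simp
      have h3 : ‖l‖ * ‖z‖ ≤ 2 := by
        rw [← habs] at h2; linarith
      have : ‖z‖ ≤ 2 / ‖l‖ := by
        rw [le_div_iff₀ hlpos]; linarith [mul_comm ‖l‖ ‖z‖]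
      exact le_trans this (le_max_left _ _)
    · push_neg at hre
      have hrabs : |z.re| = z.re := abs_of_pos hre
      -- show z.re < X
      have hreX : z.re ≤ X := by
        by_contra hgt
        push_neg at hgt
        have hx1 : (1:ℝ) ≤ z.re := le_trans (le_max_right _ _) hgt.le
        have hx0 : R₀ ≤ z.re := le_trans (le_max_left _ _) hgt.le
        have h1 : C ≤ Real.exp z.re / z.re ^ 1 := hR₀ z.re hx0
        have h2 : C * z.re ≤ Real.exp z.re := by
          rw [pow_one] at h1
          calc C * z.re ≤ (Real.exp z.re / z.re) * z.re :=
                mul_le_mul_of_nonneg_right h1 (by linarith)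
            _ = Real.exp z.re := by field_simp
        have h3 : Real.exp z.re ≤ ‖l‖ * ‖z‖ + 1 := by
          rw [habs]
          calc ‖l * z + 1‖ ≤ ‖l * z‖ + ‖(1:ℂ)‖ := norm_add_le _ _
            _ = ‖l‖ * ‖z‖ + 1 := by rw [norm_mul]; simp
        have h4 : ‖z‖ ≤ z.re + 2 * π := by rw [hrabs] at hzle; exact hzle
        have h5 : Real.exp z.re ≤ ‖l‖ * (z.re + 2 * π) + 1 :=
          le_trans h3 (by nlinarith)
        have h6 : C * z.re ≥ ‖l‖ * z.re + 2 * π * ‖l‖ + 2 := by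
          rw [hCdef]; nlinarith [mul_nonneg (mul_nonneg (by linarith : (0:ℝ) ≤ 2*π) hlpos.le) (by linarith : (0:ℝ) ≤ z.re - 1)]
        nlinarith
      have : ‖z‖ ≤ X + 2 * π := by rw [hrabs] at hzle; linarith
      exact le_trans this (le_max_right _ _)
  -- the bounding set is compact and discrete, hence finite
  apply Set.Finite.subset _ hbound
  apply IsCompact.finite
  · apply (isCompact_closedBall (0:ℂ) R).inter_left
    have hcont : Continuous f := by
      simp only [hf]
      exact Complex.continuous_exp.sub (by continuity)
    exact isClosed_eq hcont continuous_const
  · rw [isDiscrete_iff_nhdsNE]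
    intro x hx
    rw [Filter.inf_principal_eq_bot]
    have hx0 : f x = 0 := hx.1
    filter_upwards [hiso x hx0] with w hw
    intro hwS
    exact hw hwS.1
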